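/- The spread of the ratios is controlled: (n − 2) · (min_{i ≠ j} v̂_i A_{i,j} v̂_j) · (max_i u_i − min_i u_i) ≤ 4ε · max_i u_i; consequently 1 − (min_i u_i)/(max_i u_i) ≤ min{ 1 , 4ε / ((n − 2) · min_{i ≠ j} v̂_i A_{i,j} v̂_j) }. -/

import Mathlib

open Finset

/-- Spread control of the ratios `u i = v i / v̂ i`:
`(n − 2) · (min_{i ≠ j} v̂_i A_{i,j} v̂_j) · (max u − min u) ≤ 4ε · max u`, and hence
`1 − (min u)/(max u) ≤ min { 1 , 4ε / ((n − 2) · min_{i ≠ j} v̂_i A_{i,j} v̂_j) }`. -/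
theorem ratio_spread_bound
    {n : ℕ} (hn : 3 ≤ n)
    (A : Fin n → Fin n → ℝ)
    (hA_symm : ∀ i j, A i j = A j i)
    (hA_nonneg : ∀ i j, 0 ≤ A i j)
    (hA_diag : ∀ i, A i i = 0)
    (hA_offdiag : ∀ i j, i ≠ j → 0 < A i j)
    (v : Fin n → ℝ) (hv : ∀ i, 0 < v i)
    (hds : ∀ i, ∑ j, v i * A i j * v j = 1)
    (ε : ℝ) (hε0 : 0 < ε) (hε1 : ε < 1)
    (vh : Fin n → ℝ) (hvh : ∀ i, 0 < vh i)
    (happrox : ∀ i, |∑ j, vh i * A i j * vh j - 1| ≤ ε)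
    (M : ℝ)
    (hM : M = Finset.inf' (Finset.univ.filter (fun p : Fin n × Fin n => p.1 ≠ p.2))
        ⟨(⟨0, by omega⟩, ⟨1, by omega⟩), by
          simp only [Finset.mem_filter, Finset.mem_univ, true_and]
          exact Fin.ne_of_val_ne (by simp)⟩
        (fun p => vh p.1 * A p.1 p.2 * vh p.2))
    (umin umax : ℝ)
    (humin : umin = Finset.inf' Finset.univ ⟨⟨0, by omega⟩, Finset.mem_univ _⟩
        (fun i => v i / vh i))
    (humax : umax = Finset.sup' Finset.univ ⟨⟨0, by omega⟩, Finset.mem_univ _⟩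
        (fun i => v i / vh i)) :
    ((n : ℝ) - 2) * M * (umax - umin) ≤ 4 * ε * umax ∧
      1 - umin / umax ≤ min 1 (4 * ε / (((n : ℝ) - 2) * M)) := by
  have hn3 : (3:ℝ) ≤ (n:ℝ) := by exact_mod_cast hn
  have hB_nonneg : ∀ i j : Fin n, 0 ≤ vh i * A i j * vh j := fun i j =>
    mul_nonneg (mul_nonneg (hvh i).le (hA_nonneg i j)) (hvh j).le
  have hu_pos : ∀ i : Fin n, 0 < v i / vh i := fun i => div_pos (hv i) (hvh i)
  have hle_umax : ∀ j : Fin n, v j / vh j ≤ umax := by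
    intro j; rw [humax]; exact Finset.le_sup' (fun i : Fin n => v i / vh i) (Finset.mem_univ j)
  have humin_le : ∀ j : Fin n, umin ≤ v j / vh j := by
    intro j; rw [humin]; exact Finset.inf'_le (fun i : Fin n => v i / vh i) (Finset.mem_univ j)
  obtain ⟨imax, -, himaxe⟩ := Finset.exists_mem_eq_sup'
    (⟨(⟨0, by omega⟩ : Fin n), Finset.mem_univ _⟩ :
      (Finset.univ : Finset (Fin n)).Nonempty) (fun i : Fin n => v i / vh i)
  obtain ⟨imin, -, himine⟩ := Finset.exists_mem_eq_inf'
    (⟨(⟨0, by omega⟩ : Fin n), Finset.mem_univ _⟩ :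
      (Finset.univ : Finset (Fin n)).Nonempty) (fun i : Fin n => v i / vh i)
  have himax' : umax = v imax / vh imax := by rw [humax]; exact himaxe
  have himin' : umin = v imin / vh imin := by rw [humin]; exact himine
  have umax_pos : 0 < umax := himax' ▸ hu_pos imax
  have umin_pos : 0 < umin := himin' ▸ hu_pos imin
  have hM_le : ∀ i j : Fin n, i ≠ j → M ≤ vh i * A i j * vh j := by
    intro i j hij
    rw [hM]
    exact Finset.inf'_le (b := (i, j)) (fun p : Fin n × Fin n => vh p.1 * A p.1 p.2 * vh p.2) (Finset.mem_filter.mpr ⟨Finset.mem_univ _, hij⟩)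
  have hM_pos : 0 < M := by
    rw [hM]; refine (Finset.lt_inf'_iff _).2 ?_
    rintro ⟨i, j⟩ hp
    simp only [Finset.mem_filter, Finset.mem_univ, true_and] at hp
    exact mul_pos (mul_pos (hvh i) (hA_offdiag i j hp)) (hvh j)
  have hRle : ∀ i, ∑ j, vh i * A i j * vh j ≤ 1 + ε := by
    intro i; have := (abs_le.mp (happrox i)).2; linarith
  have hRge : ∀ i, 1 - ε ≤ ∑ j, vh i * A i j * vh j := by
    intro i; have := (abs_le.mp (happrox i)).1; linarith
  have hrow : ∀ i : Fin n, (v i / vh i) * ∑ j, (v j / vh j) * (vh i * A i j * vh j) = 1 := by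
    intro i
    rw [Finset.mul_sum, ← hds i]
    refine Finset.sum_congr rfl fun j _ => ?_
    have h1 := (hvh i).ne'
    have h2 := (hvh j).ne'
    field_simp
  have humin_umax : umin ≤ umax := by rw [himax']; exact humin_le imax
  have part1 : ((n : ℝ) - 2) * M * (umax - umin) ≤ 4 * ε * umax := by
    rcases eq_or_lt_of_le humin_umax with heq | hlt
    · rw [← heq, sub_self, mul_zero]
      nlinarith [mul_pos hε0 umax_pos]
    · have hne' : imax ≠ imin := by
        intro h
        rw [himax', himin', h] at hlt
        exact lt_irrefl _ hlt
      set S : Finset (Fin n) := Finset.univ \ {imax, imin} with hS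
      have hScard : (S.card : ℝ) = (n : ℝ) - 2 := by
        have hc : S.card = n - 2 := by
          rw [hS, Finset.card_sdiff_of_subset (Finset.subset_univ _), Finset.card_univ,
            Fintype.card_fin, Finset.card_pair hne']
        rw [hc, Nat.cast_sub (by omega : 2 ≤ n), Nat.cast_ofNat]
      have hmemS : ∀ j ∈ S, j ≠ imax ∧ j ≠ imin := by
        intro j hj
        rw [hS, Finset.mem_sdiff] at hj
        simpa [not_or] using hj.2
      have hrowmax := hrow imax
      have hrowmin := hrow imin
      rw [← himax'] at hrowmax
      rw [← himin'] at hrowmin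
      -- Step A : umax * umin * (1 - ε) ≤ 1
      have hSmax_lb : umin * (1 - ε) ≤ ∑ j, (v j / vh j) * (vh imax * A imax j * vh j) := by
        calc umin * (1 - ε) ≤ umin * ∑ j, vh imax * A imax j * vh j :=
              mul_le_mul_of_nonneg_left (hRge imax) umin_pos.le
          _ = ∑ j, umin * (vh imax * A imax j * vh j) := Finset.mul_sum _ _ _
          _ ≤ ∑ j, (v j / vh j) * (vh imax * A imax j * vh j) :=
              Finset.sum_le_sum fun j _ =>
                mul_le_mul_of_nonneg_right (humin_le j) (hB_nonneg imax j)
      have stepA : umax * umin * (1 - ε) ≤ 1 := by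
        have := mul_le_mul_of_nonneg_left hSmax_lb umax_pos.le
        nlinarith [hrowmax]
      -- upper bound on row imin
      have e1 : ∑ j, (v j / vh j) * (vh imin * A imin j * vh j)
          + ∑ j, (umax - v j / vh j) * (vh imin * A imin j * vh j)
          = umax * ∑ j, vh imin * A imin j * vh j := by
        rw [← Finset.sum_add_distrib, Finset.mul_sum]
        exact Finset.sum_congr rfl fun j _ => by ring
      have e2 : ∑ j ∈ S, (umax - v j / vh j) * M
          ≤ ∑ j, (umax - v j / vh j) * (vh imin * A imin j * vh j) := by
        calc ∑ j ∈ S, (umax - v j / vh j) * M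
            ≤ ∑ j ∈ S, (umax - v j / vh j) * (vh imin * A imin j * vh j) :=
              Finset.sum_le_sum fun j hj =>
                mul_le_mul_of_nonneg_left (hM_le imin j (Ne.symm (hmemS j hj).2))
                  (sub_nonneg.2 (hle_umax j))
          _ ≤ ∑ j, (umax - v j / vh j) * (vh imin * A imin j * vh j) :=
              Finset.sum_le_sum_of_subset_of_nonneg (Finset.subset_univ _)
                fun j _ _ => mul_nonneg (sub_nonneg.2 (hle_umax j)) (hB_nonneg imin j)
      have e3 : umax * ∑ j, vh imin * A imin j * vh j ≤ umax * (1 + ε) :=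
        mul_le_mul_of_nonneg_left (hRle imin) umax_pos.le
      have h1 : ∑ j, (v j / vh j) * (vh imin * A imin j * vh j)
          + ∑ j ∈ S, (umax - v j / vh j) * M ≤ umax * (1 + ε) := by linarith
      -- lower bound on row imax
      have e4 : ∑ j, (v j / vh j) * (vh imax * A imax j * vh j)
          = umin * ∑ j, vh imax * A imax j * vh j
            + ∑ j, (v j / vh j - umin) * (vh imax * A imax j * vh j) := by
        rw [Finset.mul_sum, ← Finset.sum_add_distrib]
        exact Finset.sum_congr rfl fun j _ => by ring
      have e5 : ∑ j ∈ S, (v j / vh j - umin) * M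
          ≤ ∑ j, (v j / vh j - umin) * (vh imax * A imax j * vh j) := by
        calc ∑ j ∈ S, (v j / vh j - umin) * M
            ≤ ∑ j ∈ S, (v j / vh j - umin) * (vh imax * A imax j * vh j) :=
              Finset.sum_le_sum fun j hj =>
                mul_le_mul_of_nonneg_left (hM_le imax j (Ne.symm (hmemS j hj).1))
                  (sub_nonneg.2 (humin_le j))
          _ ≤ ∑ j, (v j / vh j - umin) * (vh imax * A imax j * vh j) :=
              Finset.sum_le_sum_of_subset_of_nonneg (Finset.subset_univ _)
                fun j _ _ => mul_nonneg (sub_nonneg.2 (humin_le j)) (hB_nonneg imax j)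
      have e6 : umin * (1 - ε) ≤ umin * ∑ j, vh imax * A imax j * vh j :=
        mul_le_mul_of_nonneg_left (hRge imax) umin_pos.le
      have h3 : umin * (1 - ε) + ∑ j ∈ S, (v j / vh j - umin) * M
          ≤ ∑ j, (v j / vh j) * (vh imax * A imax j * vh j) := by linarith
      -- the combined S-sum
      have hsum : ∑ j ∈ S, (umax - v j / vh j) * M + ∑ j ∈ S, (v j / vh j - umin) * M
          = ((n : ℝ) - 2) * M * (umax - umin) := by
        rw [← Finset.sum_add_distrib]
        calc ∑ j ∈ S, ((umax - v j / vh j) * M + (v j / vh j - umin) * M)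
            = ∑ j ∈ S, (umax - umin) * M := Finset.sum_congr rfl fun j _ => by ring
          _ = S.card • ((umax - umin) * M) := Finset.sum_const _
          _ = (S.card : ℝ) * ((umax - umin) * M) := nsmul_eq_mul _ _
          _ = ((n : ℝ) - 2) * M * (umax - umin) := by rw [hScard]; ring
      -- 1/umin - 1/umax lower bound
      have hd : 0 < umin * umax := mul_pos umin_pos umax_pos
      have heq2 : (∑ j, (v j / vh j) * (vh imin * A imin j * vh j)
          - ∑ j, (v j / vh j) * (vh imax * A imax j * vh j)) * (umin * umax)
          = umax - umin := by
        linear_combination umax * hrowmin - umin * hrowmax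
      have hinv : (1 - ε) * (umax - umin)
          ≤ ∑ j, (v j / vh j) * (vh imin * A imin j * vh j)
            - ∑ j, (v j / vh j) * (vh imax * A imax j * vh j) := by
        have hD : ∑ j, (v j / vh j) * (vh imin * A imin j * vh j)
            - ∑ j, (v j / vh j) * (vh imax * A imax j * vh j)
            = (umax - umin) / (umin * umax) := (eq_div_iff hd.ne').mpr heq2
        rw [hD, le_div_iff₀ hd]
        nlinarith [mul_le_mul_of_nonneg_right stepA (sub_pos.2 hlt).le]
      have hεu : 0 ≤ ε * umax := (mul_pos hε0 umax_pos).le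
      linarith [h1, h3, hsum, hinv, hεu]
  refine ⟨part1, le_min ?_ ?_⟩
  · have h0 : 0 ≤ umin / umax := (div_pos umin_pos umax_pos).le
    linarith
  · have hden : 0 < ((n : ℝ) - 2) * M := mul_pos (by linarith) hM_pos
    have h : 1 - umin / umax = (umax - umin) / umax := by
      field_simp
    rw [h, div_le_div_iff₀ umax_pos hden]
    linarith [part1]
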